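/- Let biG = (𝒩, ℰ, ℰ′) be a bilevel graph on 𝒩 = {1,…,N} with N ≥ 2 and Laplacian L of the base graph G′, and let L = Z Zᵀ = Z̃ Z̃ᵀ with Z, Z̃ ∈ ℝ^{N×(N−1)} of full rank, related by Z̃ = Z O for an orthogonal matrix O ∈ ℝ^{(N−1)×(N−1)}. Let A_1, …, A_N be maximal monotone operators on a real Hilbert space H, σ > 0, θ_k ∈ (0,2], and let (x^k, w^k) and (x̃^k, w̃^k) be the sequences generated by the graph-based Douglas–Rachford iteration with respect to Z and Z̃ respectively. If w^0 = (O⊗I)w̃^0, then for every k ∈ ℕ, w^k = (O⊗I)w̃^k and x^k = x̃^k. -/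

import Mathlib

open scoped InnerProductSpace Topology
open Filter

noncomputable section

/-- The simple (undirected) graph induced by a set of directed edges on `Fin N`. -/
def graphOf {N : ℕ} (E : Finset (Fin N × Fin N)) : SimpleGraph (Fin N) where
  Adj i j := i ≠ j ∧ ((i, j) ∈ E ∨ (j, i) ∈ E)
  symm := ⟨fun i j h => ⟨h.1.symm, h.2.symm⟩⟩
  loopless := ⟨fun i h => h.1 rfl⟩

/-- Degree of node `i` in the undirected graph induced by `E`: number of adjacent nodes. -/
def degE {N : ℕ} (E : Finset (Fin N × Fin N)) (i : Fin N) : ℕ :=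
  (Finset.univ.filter (fun j => j ≠ i ∧ ((i, j) ∈ E ∨ (j, i) ∈ E))).card

/-- The graph Laplacian of the graph induced by `E`. -/
def lapE {N : ℕ} (E : Finset (Fin N × Fin N)) : Matrix (Fin N) (Fin N) ℝ :=
  fun i j =>
    if i = j then (degE E i : ℝ)
    else if (i, j) ∈ E ∨ (j, i) ∈ E then -1 else 0

/-- The skew-symmetric matrix `Σ` built from the Laplacian of the base graph. -/
def sigmaE {N : ℕ} (E' : Finset (Fin N × Fin N)) : Matrix (Fin N) (Fin N) ℝ :=
  fun i j => if i < j then -(lapE E' i j) else if j < i then lapE E' i j else 0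

/-- The matrix `P^{ij}`. -/
def pijM (N : ℕ) (i j : Fin N) : Matrix (Fin N) (Fin N) ℝ :=
  fun h k =>
    if h = i ∧ k = i then 1
    else if h = j ∧ k = j then 1
    else if h = j ∧ k = i then -2 else 0

/-- The matrix `P = ∑_{(i,j) ∈ ℰ∖ℰ′} P^{ij}`. -/
def pE {N : ℕ} (E E' : Finset (Fin N × Fin N)) : Matrix (Fin N) (Fin N) ℝ :=
  ∑ e ∈ E \ E', pijM N e.1 e.2

/-- The block operator `Q ⊗ I : H^M → H^N` induced by a matrix `Q ∈ ℝ^{N×M}`. -/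
def matVecH {H : Type*} [NormedAddCommGroup H] [InnerProductSpace ℝ H] {N M : ℕ}
    (Q : Matrix (Fin N) (Fin M) ℝ) (x : Fin M → H) : Fin N → H :=
  fun h => ∑ k, Q h k • x k

/-- `(E, E')` forms a bilevel graph: the state graph `(𝒩, E)` is connected with a topological
ordering, and the base graph `(𝒩, E')` is a connected subgraph. -/
structure IsBilevel {N : ℕ} (E E' : Finset (Fin N × Fin N)) : Prop where
  base_subset : E' ⊆ E
  topo : ∀ e ∈ E, e.1 < e.2
  state_conn : (graphOf E).Connected
  base_conn : (graphOf E').Connected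

/-- `Z` gives an onto decomposition of the Laplacian of the base graph `E'`:
`L = Z Zᵀ` and `ker Zᵀ = span{(1,…,1)}`. -/
def ZOnto {N : ℕ} (E' : Finset (Fin N × Fin N)) (Z : Matrix (Fin N) (Fin (N - 1)) ℝ) : Prop :=
  Z * Z.transpose = lapE E' ∧
  ∀ v : Fin N → ℝ, Z.transpose.mulVec v = 0 ↔ ∃ c : ℝ, v = fun _ => c

/-- The graph-based Douglas–Rachford iteration: `a_i^{k+1} ∈ A_i x_i^{k+1}`,
`(L⊗I)x^{k+1} + ((Σ+P)⊗I)x^{k+1} + σ a^{k+1} = (Z⊗I)w^k` and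
`w^{k+1} = w^k − θ_k (Zᵀ⊗I)x^{k+1}`. -/
structure IsGDR {H : Type*} [NormedAddCommGroup H] [InnerProductSpace ℝ H] {N : ℕ}
    (E E' : Finset (Fin N × Fin N)) (Z : Matrix (Fin N) (Fin (N - 1)) ℝ)
    (A : Fin N → H → Set H) (σ : ℝ) (θ : ℕ → ℝ)
    (x : ℕ → Fin N → H) (a : ℕ → Fin N → H) (w : ℕ → Fin (N - 1) → H) : Prop where
  mem : ∀ k i, a (k + 1) i ∈ A i (x (k + 1) i)
  res : ∀ k, matVecH (lapE E' + sigmaE E' + pE E E') (x (k + 1)) + σ • a (k + 1)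
          = matVecH Z (w k)
  upd : ∀ k, w (k + 1) = w k - θ k • matVecH Z.transpose (x (k + 1))

/-- A set-valued operator on a real inner product space is monotone. -/
def IsMonotoneOp {K : Type*} [NormedAddCommGroup K] [InnerProductSpace ℝ K]
    (A : K → Set K) : Prop :=
  ∀ x y u v : K, u ∈ A x → v ∈ A y → 0 ≤ ⟪u - v, x - y⟫_ℝ

/-- A set-valued operator is maximal monotone. -/
def IsMaxMonotone {K : Type*} [NormedAddCommGroup K] [InnerProductSpace ℝ K]
    (A : K → Set K) : Prop :=
  IsMonotoneOp A ∧ ∀ x u : K, (∀ y v : K, v ∈ A y → 0 ≤ ⟪u - v, x - y⟫_ℝ) → u ∈ A x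

/-- `zer (A_1 + ⋯ + A_N) ≠ ∅`. -/
def SumZerNonempty {H : Type*} [NormedAddCommGroup H] [InnerProductSpace ℝ H] {N : ℕ}
    (A : Fin N → H → Set H) : Prop :=
  ∃ (xs : H) (b : Fin N → H), (∀ i, b i ∈ A i xs) ∧ ∑ i, b i = 0

/-- Weak convergence of a sequence in an inner product space. -/
def WeakLim {K : Type*} [NormedAddCommGroup K] [InnerProductSpace ℝ K]
    (u : ℕ → K) (l : K) : Prop :=
  ∀ h : K, Tendsto (fun k => ⟪u k, h⟫_ℝ) atTop (𝓝 ⟪l, h⟫_ℝ)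

/-- The state variance `Var(x) = (1/N) ∑_i ‖x_i − x̄‖²`. -/
def stateVar {H : Type*} [NormedAddCommGroup H] [InnerProductSpace ℝ H] {N : ℕ}
    (x : Fin N → H) : ℝ :=
  (N : ℝ)⁻¹ * ∑ i, ‖x i - (N : ℝ)⁻¹ • ∑ j, x j‖ ^ 2

/-- In-degree `d_i⁺ = #{h : (h,i) ∈ E}` of node `i`. -/
def inDeg {N : ℕ} (E : Finset (Fin N × Fin N)) (i : Fin N) : ℕ :=
  (Finset.univ.filter (fun h => (h, i) ∈ E)).card

/-- Out-degree `d_i⁻ = #{h : (i,h) ∈ E}` of node `i`. -/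
def outDeg {N : ℕ} (E : Finset (Fin N × Fin N)) (i : Fin N) : ℕ :=
  (Finset.univ.filter (fun h => (i, h) ∈ E)).card

/-- The unbalance `U_G = sqrt((1/N) ∑_i (d_i⁻ − d_i⁺)²)` of the state graph. -/
def unbalance {N : ℕ} (E : Finset (Fin N × Fin N)) : ℝ :=
  Real.sqrt ((N : ℝ)⁻¹ * ∑ i, ((outDeg E i : ℝ) - (inDeg E i : ℝ)) ^ 2)

end

section Aux

variable {H : Type*} [NormedAddCommGroup H] [InnerProductSpace ℝ H]

lemma matVecH_mul {N M K : ℕ} (A : Matrix (Fin N) (Fin M) ℝ) (B : Matrix (Fin M) (Fin K) ℝ)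
    (v : Fin K → H) : matVecH (A * B) v = matVecH A (matVecH B v) := by
  funext h
  simp only [matVecH, Matrix.mul_apply, Finset.sum_smul, Finset.smul_sum, mul_smul]
  exact Finset.sum_comm

lemma matVecH_smul {N M : ℕ} (Q : Matrix (Fin N) (Fin M) ℝ) (c : ℝ) (v : Fin M → H) :
    matVecH Q (c • v) = c • matVecH Q v := by
  funext h
  simp only [matVecH, Pi.smul_apply, Finset.smul_sum, smul_smul, mul_comm]

lemma matVecH_sub {N M : ℕ} (Q : Matrix (Fin N) (Fin M) ℝ) (v v' : Fin M → H) :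
    matVecH Q (v - v') = matVecH Q v - matVecH Q v' := by
  funext h
  simp only [matVecH, Pi.sub_apply, smul_sub, Finset.sum_sub_distrib]

/-- The key matrix identity: `L + Σ + P = ∑_{e ∈ E} P^e`. -/
lemma key_matrix {N : ℕ} (E E' : Finset (Fin N × Fin N)) (hsub : E' ⊆ E)
    (htopo : ∀ e ∈ E, e.1 < e.2) :
    lapE E' + sigmaE E' + pE E E' = ∑ e ∈ E, pijM N e.1 e.2 := by
  have htopo' : ∀ e ∈ E', e.1 < e.2 := fun e he => htopo e (hsub he)
  have hsplit : ∑ e ∈ E, pijM N e.1 e.2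
      = ∑ e ∈ E \ E', pijM N e.1 e.2 + ∑ e ∈ E', pijM N e.1 e.2 :=
    (Finset.sum_sdiff hsub).symm
  have hbase : lapE E' + sigmaE E' = ∑ e ∈ E', pijM N e.1 e.2 := by
    ext i j
    rw [Matrix.sum_apply]
    by_cases hij : i = j
    · subst hij
      have hrhs : ∀ e ∈ E', pijM N e.1 e.2 i i
          = (if e.1 = i then (1:ℝ) else 0) + (if e.2 = i then (1:ℝ) else 0) := by
        intro e he
        have hne : e.1 ≠ e.2 := ne_of_lt (htopo' e he)
        by_cases h1 : e.1 = i <;> by_cases h2 : e.2 = i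
        · exact absurd (h1.trans h2.symm) hne
        · simp [pijM, h1, h2, Ne.symm h2]
        · simp [pijM, h1, Ne.symm h1, h2]
        · simp [pijM, h1, h2, Ne.symm h1, Ne.symm h2]
      have h1 : ∀ e : Fin N × Fin N, (if e.1 = i then (1:ℝ) else 0)
          = ∑ j : Fin N, if e = (i, j) then (1:ℝ) else 0 := by
        intro e
        by_cases h : e.1 = i
        · rw [Finset.sum_eq_single e.2]
          · simp [Prod.ext_iff, h]
          · intro b _ hb; simp [Prod.ext_iff, h, Ne.symm hb]
          · simp
        · simp [Prod.ext_iff, h]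
      have h2 : ∀ e : Fin N × Fin N, (if e.2 = i then (1:ℝ) else 0)
          = ∑ j : Fin N, if e = (j, i) then (1:ℝ) else 0 := by
        intro e
        by_cases h : e.2 = i
        · rw [Finset.sum_eq_single e.1]
          · simp [Prod.ext_iff, h]
          · intro b _ hb; simp [Prod.ext_iff, h, Ne.symm hb]
          · simp
        · simp [Prod.ext_iff, h]
      have hA : ∑ e ∈ E', (if e.1 = i then (1:ℝ) else 0)
          = ∑ j : Fin N, (if (i, j) ∈ E' then (1:ℝ) else 0) :=
        calc ∑ e ∈ E', (if e.1 = i then (1:ℝ) else 0)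
            = ∑ e ∈ E', ∑ j : Fin N, (if e = (i, j) then (1:ℝ) else 0) :=
              Finset.sum_congr rfl (fun e _ => h1 e)
          _ = ∑ j : Fin N, ∑ e ∈ E', (if e = (i, j) then (1:ℝ) else 0) := Finset.sum_comm
          _ = ∑ j : Fin N, (if (i, j) ∈ E' then (1:ℝ) else 0) :=
              Finset.sum_congr rfl (fun j _ => Finset.sum_ite_eq' E' (i, j) (fun _ => (1:ℝ)))
      have hB : ∑ e ∈ E', (if e.2 = i then (1:ℝ) else 0)
          = ∑ j : Fin N, (if (j, i) ∈ E' then (1:ℝ) else 0) :=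
        calc ∑ e ∈ E', (if e.2 = i then (1:ℝ) else 0)
            = ∑ e ∈ E', ∑ j : Fin N, (if e = (j, i) then (1:ℝ) else 0) :=
              Finset.sum_congr rfl (fun e _ => h2 e)
          _ = ∑ j : Fin N, ∑ e ∈ E', (if e = (j, i) then (1:ℝ) else 0) := Finset.sum_comm
          _ = ∑ j : Fin N, (if (j, i) ∈ E' then (1:ℝ) else 0) :=
              Finset.sum_congr rfl (fun j _ => Finset.sum_ite_eq' E' (j, i) (fun _ => (1:ℝ)))
      rw [Finset.sum_congr rfl hrhs, Finset.sum_add_distrib, hA, hB,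
        ← Finset.sum_add_distrib]
      have hL : (lapE E' + sigmaE E') i i = (degE E' i : ℝ) := by
        simp [lapE, sigmaE, Matrix.add_apply]
      rw [hL, degE, Finset.card_filter]
      push_cast
      refine Finset.sum_congr rfl fun j _ => ?_
      by_cases hij' : (i, j) ∈ E' <;> by_cases hji : (j, i) ∈ E'
      · exact absurd (htopo' _ hji) (not_lt.2 (le_of_lt (htopo' _ hij')))
      · have := htopo' _ hij'
        simp [hij', hji, (ne_of_lt this).symm]
      · have := htopo' _ hji
        simp [hij', hji, (ne_of_lt this)]
      · simp [hij', hji]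
    · -- off-diagonal
      have hrhs : ∀ e ∈ E', pijM N e.1 e.2 i j
          = if (j, i) = e then (-2:ℝ) else 0 := by
        intro e he
        have hlt := htopo' e he
        have hne : e.1 ≠ e.2 := ne_of_lt hlt
        by_cases h3 : i = e.2 ∧ j = e.1
        · simp [pijM, h3.1, h3.2, hne, Ne.symm hne, hij, Prod.ext_iff]
        · have : (j, i) ≠ e := by
            intro hc
            exact h3 ⟨by rw [← hc], by rw [← hc]⟩
          simp only [pijM, this, if_neg]
          rw [if_neg, if_neg, if_neg]
          · simp [this]
          · rintro ⟨h1, h2⟩; exact h3 ⟨h1, h2⟩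
          · rintro ⟨h1, h2⟩; exact hij (h1.trans h2.symm)
          · rintro ⟨h1, h2⟩; exact hij (h1.trans h2.symm)
      rw [Finset.sum_congr rfl hrhs, Finset.sum_ite_eq E' (j, i) (fun _ => (-2:ℝ))]
      rcases lt_or_gt_of_ne (fun h : i = j => hij h) with hlt | hgt
      · have h1 : (i, j) ∉ E' ∨ True := Or.inr trivial
        have hji : (j, i) ∉ E' := fun hc => absurd (htopo' _ hc) (not_lt.2 hlt.le)
        by_cases hij' : (i, j) ∈ E' <;>
          norm_num [lapE, sigmaE, Matrix.add_apply, hij, hlt, hji, hij', not_lt.2 hlt.le,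
            lt_asymm hlt]
      · have hij' : (i, j) ∉ E' := fun hc => absurd (htopo' _ hc) (not_lt.2 hgt.le)
        by_cases hji : (j, i) ∈ E' <;>
          norm_num [lapE, sigmaE, Matrix.add_apply, hij, hgt, hji, hij', not_lt.2 hgt.le,
            lt_asymm hgt]
  rw [hsplit, hbase, pE]
  abel

lemma pij_mul {N : ℕ} {p q : Fin N} (hpq : p ≠ q) (i j : Fin N) (c : ℝ) :
    pijM N p q i j * c
      = (if i = p ∧ j = p then c else 0) + (if i = q ∧ j = q then c else 0)
        + (if i = q ∧ j = p then (-2) * c else 0) := by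
  by_cases h1 : i = p ∧ j = p
  · obtain ⟨rfl, rfl⟩ := h1
    simp [pijM, hpq, Ne.symm hpq]
  · by_cases h2 : i = q ∧ j = q
    · obtain ⟨rfl, rfl⟩ := h2
      simp [pijM, hpq, Ne.symm hpq]
    · by_cases h3 : i = q ∧ j = p
      · obtain ⟨rfl, rfl⟩ := h3
        simp [pijM, hpq, Ne.symm hpq]
      · simp [pijM, h1, h2, h3]

lemma quad_pij {N : ℕ} {p q : Fin N} (hpq : p ≠ q) (u : Fin N → H) :
    ∑ i : Fin N, ∑ j : Fin N, pijM N p q i j * ⟪u j, u i⟫_ℝ = ‖u p - u q‖ ^ 2 := by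
  have : ∀ i j : Fin N, pijM N p q i j * ⟪u j, u i⟫_ℝ
      = (if i = p ∧ j = p then ⟪u j, u i⟫_ℝ else 0)
        + (if i = q ∧ j = q then ⟪u j, u i⟫_ℝ else 0)
        + (if i = q ∧ j = p then (-2) * ⟪u j, u i⟫_ℝ else 0) := fun i j => pij_mul hpq i j _
  simp only [this, Finset.sum_add_distrib]
  have e1 : ∀ (a b : Fin N) (f : Fin N → Fin N → ℝ),
      ∑ i : Fin N, ∑ j : Fin N, (if i = a ∧ j = b then f i j else 0) = f a b := by
    intro a b f
    rw [Finset.sum_eq_single a]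
    · rw [Finset.sum_eq_single b] <;> simp +contextual
    · intro i _ hi
      apply Finset.sum_eq_zero
      intro j _
      simp [hi]
    · simp
  rw [e1 p p (fun i j => ⟪u j, u i⟫_ℝ), e1 q q (fun i j => ⟪u j, u i⟫_ℝ),
    e1 q p (fun i j => (-2) * ⟪u j, u i⟫_ℝ)]
  have hn : ‖u p - u q‖ ^ 2 = ⟪u p - u q, u p - u q⟫_ℝ :=
    (real_inner_self_eq_norm_sq _).symm
  rw [hn, inner_sub_left, inner_sub_right, inner_sub_right, real_inner_comm (u p) (u q)]
  ring

lemma quad_form {N : ℕ} (Q : Matrix (Fin N) (Fin N) ℝ) (u : Fin N → H) :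
    ∑ i, ⟪matVecH Q u i, u i⟫_ℝ = ∑ i, ∑ j, Q i j * ⟪u j, u i⟫_ℝ := by
  refine Finset.sum_congr rfl fun i _ => ?_
  rw [matVecH, sum_inner]
  exact Finset.sum_congr rfl fun j _ => real_inner_smul_left _ _ _

lemma quad_M {N : ℕ} (E E' : Finset (Fin N × Fin N)) (hsub : E' ⊆ E)
    (htopo : ∀ e ∈ E, e.1 < e.2) (u : Fin N → H) :
    ∑ i, ⟪matVecH (lapE E' + sigmaE E' + pE E E') u i, u i⟫_ℝ
      = ∑ e ∈ E, ‖u e.1 - u e.2‖ ^ 2 := by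
  rw [quad_form, key_matrix E E' hsub htopo]
  have : ∀ i j : Fin N, (∑ e ∈ E, pijM N e.1 e.2) i j * ⟪u j, u i⟫_ℝ
      = ∑ e ∈ E, pijM N e.1 e.2 i j * ⟪u j, u i⟫_ℝ := by
    intro i j
    rw [Matrix.sum_apply, Finset.sum_mul]
  simp only [this]
  have hswap : ∑ i : Fin N, ∑ j : Fin N, ∑ e ∈ E, pijM N e.1 e.2 i j * ⟪u j, u i⟫_ℝ
      = ∑ e ∈ E, ∑ i : Fin N, ∑ j : Fin N, pijM N e.1 e.2 i j * ⟪u j, u i⟫_ℝ :=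
    calc ∑ i : Fin N, ∑ j : Fin N, ∑ e ∈ E, pijM N e.1 e.2 i j * ⟪u j, u i⟫_ℝ
        = ∑ i : Fin N, ∑ e ∈ E, ∑ j : Fin N, pijM N e.1 e.2 i j * ⟪u j, u i⟫_ℝ :=
          Finset.sum_congr rfl (fun i _ => Finset.sum_comm)
      _ = ∑ e ∈ E, ∑ i : Fin N, ∑ j : Fin N, pijM N e.1 e.2 i j * ⟪u j, u i⟫_ℝ :=
          Finset.sum_comm
  rw [hswap]
  exact Finset.sum_congr rfl fun e he => quad_pij (ne_of_lt (htopo e he)) u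

/-- Uniqueness of the resolvent step. -/
lemma gdr_step_unique {N : ℕ} (hN : 2 ≤ N) (E E' : Finset (Fin N × Fin N))
    (hsub : E' ⊆ E) (htopo : ∀ e ∈ E, e.1 < e.2) (hconn : (graphOf E).Connected)
    (A : Fin N → H → Set H) (hA : ∀ i, IsMonotoneOp (A i)) (σ : ℝ) (hσ : 0 < σ)
    (x x' a a' : Fin N → H) (ha : ∀ i, a i ∈ A i (x i)) (ha' : ∀ i, a' i ∈ A i (x' i))
    (heq : matVecH (lapE E' + sigmaE E' + pE E E') x + σ • a
        = matVecH (lapE E' + sigmaE E' + pE E E') x' + σ • a') :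
    x = x' := by
  set M := lapE E' + sigmaE E' + pE E E' with hM
  set u : Fin N → H := x - x' with hu
  have hMu : matVecH M u = σ • (a' - a) := by
    rw [hu, matVecH_sub]
    have := heq
    funext i
    have h := congrFun this i
    simp only [Pi.add_apply, Pi.smul_apply, Pi.sub_apply] at h ⊢
    have : matVecH M x i - matVecH M x' i = σ • a' i - σ • a i := by
      rw [sub_eq_sub_iff_add_eq_add]
      linear_combination (norm := module) h
    rw [this, ← smul_sub]
  have hS1 : ∑ i, ⟪matVecH M u i, u i⟫_ℝ = ∑ e ∈ E, ‖u e.1 - u e.2‖ ^ 2 :=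
    quad_M E E' hsub htopo u
  have hS2 : ∑ i, ⟪matVecH M u i, u i⟫_ℝ
      = -σ * ∑ i, ⟪a i - a' i, x i - x' i⟫_ℝ := by
    rw [Finset.mul_sum]
    refine Finset.sum_congr rfl fun i _ => ?_
    rw [hMu]
    simp only [Pi.smul_apply, Pi.sub_apply]
    rw [real_inner_smul_left]
    have : (a' i - a i) = -(a i - a' i) := by abel
    rw [this, inner_neg_left]
    have hui : u i = x i - x' i := rfl
    rw [hui]
    ring
  have hterm : ∀ i, 0 ≤ ⟪a i - a' i, x i - x' i⟫_ℝ := fun i =>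
    hA i (x i) (x' i) (a i) (a' i) (ha i) (ha' i)
  have hsum_nonneg : 0 ≤ ∑ i, ⟪a i - a' i, x i - x' i⟫_ℝ :=
    Finset.sum_nonneg fun i _ => hterm i
  have hS_nonpos : ∑ i, ⟪matVecH M u i, u i⟫_ℝ ≤ 0 := by
    rw [hS2]
    exact mul_nonpos_of_nonpos_of_nonneg (by linarith) hsum_nonneg
  have hS_nonneg : 0 ≤ ∑ i, ⟪matVecH M u i, u i⟫_ℝ := by
    rw [hS1]
    exact Finset.sum_nonneg fun e _ => sq_nonneg _
  have hS0 : ∑ i, ⟪matVecH M u i, u i⟫_ℝ = 0 := le_antisymm hS_nonpos hS_nonneg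
  -- each edge term is zero
  have hedge : ∀ e ∈ E, u e.1 = u e.2 := by
    have h0 : ∀ e ∈ E, ‖u e.1 - u e.2‖ ^ 2 = 0 := by
      have := (Finset.sum_eq_zero_iff_of_nonneg (fun e _ => sq_nonneg (‖u e.1 - u e.2‖))).1
        (hS1 ▸ hS0)
      exact this
    intro e he
    have := h0 e he
    rw [sq_eq_zero_iff, norm_eq_zero, sub_eq_zero] at this
    exact this
  -- each monotonicity term is zero
  have htz : ∀ i, ⟪a i - a' i, x i - x' i⟫_ℝ = 0 := by
    have hsz : ∑ i, ⟪a i - a' i, x i - x' i⟫_ℝ = 0 := by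
      by_contra hne
      have hpos : 0 < ∑ i, ⟪a i - a' i, x i - x' i⟫_ℝ :=
        lt_of_le_of_ne hsum_nonneg (Ne.symm hne)
      have : ∑ i, ⟪matVecH M u i, u i⟫_ℝ < 0 := by
        rw [hS2]
        exact mul_neg_of_neg_of_pos (by linarith) hpos
      linarith [hS0]
    intro i
    exact (Finset.sum_eq_zero_iff_of_nonneg (fun i _ => hterm i)).1 hsz i (Finset.mem_univ i)
  -- u is constant by connectivity
  have hadj : ∀ i j : Fin N, (graphOf E).Adj i j → u i = u j := by
    intro i j hij
    rcases hij.2 with h | h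
    · exact hedge (i, j) h
    · exact (hedge (j, i) h).symm
  have hconst : ∀ i j : Fin N, u i = u j := by
    intro i j
    obtain ⟨p⟩ := hconn.preconnected i j
    induction p with
    | nil => rfl
    | cons h p ih => exact (hadj _ _ h).trans ih
  -- the distinguished node 0
  have hN0 : 0 < N := by omega
  set i0 : Fin N := ⟨0, hN0⟩ with hi0
  set c : H := u i0 with hc
  have hcu : ∀ i, u i = c := fun i => hconst i i0
  -- row sum at i0
  have hrow : ∀ e ∈ E, ∑ j, pijM N e.1 e.2 i0 j = if e.1 = i0 then (1:ℝ) else 0 := by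
    intro e he
    have hlt := htopo e he
    have he2 : e.2 ≠ i0 := by
      intro hc2
      have h1 : (e.1 : ℕ) < (e.2 : ℕ) := hlt
      rw [hc2] at h1
      exact Nat.not_lt_zero _ h1
    by_cases h1 : e.1 = i0
    · rw [if_pos h1]
      rw [Finset.sum_eq_single e.1]
      · simp [pijM, h1, Ne.symm he2]
      · intro b _ hb
        simp only [pijM]
        rw [if_neg, if_neg, if_neg]
        · rintro ⟨hq, hp⟩; exact hb (hp ▸ rfl)
        · rintro ⟨hq, _⟩; exact he2 (hq ▸ h1 ▸ rfl)
        · rintro ⟨_, hp⟩; exact hb (hp ▸ rfl)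
      · simp
    · rw [if_neg h1]
      apply Finset.sum_eq_zero
      intro b _
      simp only [pijM]
      rw [if_neg, if_neg, if_neg]
      · rintro ⟨hq, _⟩; exact he2 (hq ▸ rfl)
      · rintro ⟨hq, _⟩; exact he2 (hq ▸ rfl)
      · rintro ⟨hp, _⟩; exact h1 (hp ▸ rfl)
  have hrowM : ∑ j, M i0 j = ((E.filter fun e => e.1 = i0).card : ℝ) := by
    rw [hM, key_matrix E E' hsub htopo]
    have : ∀ j, (∑ e ∈ E, pijM N e.1 e.2) i0 j = ∑ e ∈ E, pijM N e.1 e.2 i0 j := by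
      intro j; rw [Matrix.sum_apply]
    simp only [this]
    rw [Finset.sum_comm, Finset.card_filter]
    push_cast
    exact Finset.sum_congr rfl hrow
  -- node 0 has an out-edge
  have hnbr : ∃ e ∈ E, e.1 = i0 := by
    set j1 : Fin N := ⟨1, by omega⟩ with hj1
    have hne01 : i0 ≠ j1 := by
      intro hcon
      have : (0 : ℕ) = 1 := congrArg Fin.val hcon
      omega
    obtain ⟨p⟩ := hconn.preconnected i0 j1
    have hnn : ¬ p.Nil := SimpleGraph.Walk.not_nil_of_ne hne01
    obtain ⟨b, hadjb, q, hq⟩ := SimpleGraph.Walk.not_nil_iff.1 hnn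
    rcases hadjb.2 with hm | hm
    · exact ⟨(i0, b), hm, rfl⟩
    · exfalso
      have hlt := htopo _ hm
      have hlt' : (b : ℕ) < 0 := hlt
      omega
  have hrow_pos : 0 < ∑ j, M i0 j := by
    rw [hrowM]
    obtain ⟨e, he, he1⟩ := hnbr
    have : 0 < (E.filter fun e => e.1 = i0).card :=
      Finset.card_pos.2 ⟨e, Finset.mem_filter.2 ⟨he, he1⟩⟩
    exact_mod_cast this
  -- conclude c = 0
  have hMuc : matVecH M u i0 = (∑ j, M i0 j) • c := by
    rw [matVecH]
    rw [Finset.sum_smul]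
    exact Finset.sum_congr rfl fun j _ => by rw [hcu j]
  have hip : ⟪matVecH M u i0, u i0⟫_ℝ = 0 := by
    rw [hMu]
    simp only [Pi.smul_apply, Pi.sub_apply]
    rw [real_inner_smul_left]
    have : (a' i0 - a i0) = -(a i0 - a' i0) := by abel
    rw [this, inner_neg_left]
    have hui : u i0 = x i0 - x' i0 := rfl
    rw [hui, htz i0]
    ring
  have hc0 : c = 0 := by
    rw [hMuc, hcu i0, real_inner_smul_left, real_inner_self_eq_norm_sq] at hip
    rcases mul_eq_zero.1 hip with h | h
    · exact absurd h (ne_of_gt hrow_pos)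
    · rwa [pow_eq_zero_iff (by norm_num), norm_eq_zero] at h
  funext i
  have h1 := hcu i
  rw [hc0] at h1
  have h2 : x i - x' i = 0 := h1
  exact sub_eq_zero.mp h2

end Aux

/-- **Remark 3.8.** Independence of the graph-based Douglas–Rachford method from
the onto decomposition of the Laplacian: if `L = Z Zᵀ = Z̃ Z̃ᵀ` with `Z̃ = Z O` for an orthogonal
matrix `O`, and `w^0 = (O⊗I)w̃^0`, then `w^k = (O⊗I)w̃^k` and `x^k = x̃^k` for every `k`. -/
theorem graphDRS_independent_of_onto_decomposition
    {H : Type*} [NormedAddCommGroup H] [InnerProductSpace ℝ H] [CompleteSpace H]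
    (N : ℕ) (hN : 2 ≤ N) (E E' : Finset (Fin N × Fin N)) (hbi : IsBilevel E E')
    (Z Zt : Matrix (Fin N) (Fin (N - 1)) ℝ)
    (hZ : Z * Z.transpose = lapE E') (hZt : Zt * Zt.transpose = lapE E')
    (hZrank : Z.rank = N - 1) (hZtrank : Zt.rank = N - 1)
    (O : Matrix (Fin (N - 1)) (Fin (N - 1)) ℝ)
    (hO : O * O.transpose = 1) (hO' : O.transpose * O = 1)
    (hZtO : Zt = Z * O)
    (A : Fin N → H → Set H) (hA : ∀ i, IsMaxMonotone (A i))
    (σ : ℝ) (hσ : 0 < σ)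
    (θ : ℕ → ℝ) (hθ : ∀ k, θ k ∈ Set.Ioc (0 : ℝ) 2)
    (x a : ℕ → Fin N → H) (w : ℕ → Fin (N - 1) → H)
    (hiter : IsGDR E E' Z A σ θ x a w)
    (xt at' : ℕ → Fin N → H) (wt : ℕ → Fin (N - 1) → H)
    (hitert : IsGDR E E' Zt A σ θ xt at' wt)
    (h0 : w 0 = matVecH O (wt 0)) :
    ∀ k : ℕ, w k = matVecH O (wt k) ∧ x (k + 1) = xt (k + 1) := by
  have hstep : ∀ k, w k = matVecH O (wt k) → x (k + 1) = xt (k + 1) := by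
    intro k hwk
    have hres := hiter.res k
    have hrest := hitert.res k
    have hrhs : matVecH Zt (wt k) = matVecH Z (w k) := by
      rw [hwk, hZtO, matVecH_mul]
    rw [hrhs] at hrest
    exact gdr_step_unique hN E E' hbi.base_subset hbi.topo hbi.state_conn A
      (fun i => (hA i).1) σ hσ (x (k + 1)) (xt (k + 1)) (a (k + 1)) (at' (k + 1))
      (hiter.mem k) (hitert.mem k) (hres.trans hrest.symm)
  have hwstep : ∀ k, w k = matVecH O (wt k) → x (k + 1) = xt (k + 1) →
      w (k + 1) = matVecH O (wt (k + 1)) := by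
    intro k hwk hxk
    rw [hiter.upd k, hitert.upd k, hwk, hxk]
    have h1 : matVecH Zt.transpose (xt (k + 1)) =
        matVecH O.transpose (matVecH Z.transpose (xt (k + 1))) := by
      rw [← matVecH_mul, hZtO, Matrix.transpose_mul]
    have h2 : matVecH O (wt k - θ k • matVecH Zt.transpose (xt (k + 1)))
        = matVecH O (wt k) - θ k • matVecH O (matVecH Zt.transpose (xt (k + 1))) := by
      rw [matVecH_sub, matVecH_smul]
    rw [h2, h1, ← matVecH_mul, hO, ]
    funext h
    simp only [Pi.sub_apply, Pi.smul_apply]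
    congr 2
    have : matVecH (1 : Matrix (Fin (N-1)) (Fin (N-1)) ℝ) (matVecH Z.transpose (xt (k+1)))
        = matVecH Z.transpose (xt (k+1)) := by
      funext h'
      simp [matVecH, Matrix.one_apply, ite_smul]
    rw [this]
  intro k
  induction k with
  | zero => exact ⟨h0, hstep 0 h0⟩
  | succ n ih =>
    have hw := hwstep n ih.1 ih.2
    exact ⟨hw, hstep (n + 1) hw⟩
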